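/- arXiv:2302.07186 — 3 statements merged into one kernel-verified Lean document; each statement's English description precedes it below -/
import Mathlib

section
/- Let 𝒳 be a separable metrizable space with its Borel σ-algebra, 𝕏 = (X_t)_{t≥1} a stochastic process on 𝒳, and 𝒯 ⊆ ℕ a possibly random set of times such that the extended process 𝕏̃ = (X_t)_{t∈𝒯} satisfies condition C1. Then for every ε > 0 there exist an integer T_ε ≥ 1 and δ > 0 such that for every measurable set A ⊆ 𝒳: if E[μ̂_{𝕏̃}(A)] ≤ δ, then E[ sup_{T ≥ T_ε} (1/T) Σ_{t ≤ T, t ∈ 𝒯} 1_A(X_t) ] ≤ ε. -/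
open MeasureTheory Filter Set Topology

noncomputable section

variable {Ω : Type*} [MeasurableSpace Ω] {𝒳 : Type*} [MeasurableSpace 𝒳]

/-- Average number of times `t ∈ 𝒯 ω`, `1 ≤ t ≤ T`, with `X t ω ∈ A`, divided by `T`. -/
def avgVisit (X : ℕ → Ω → 𝒳) (𝒯 : Ω → Set ℕ) (A : Set 𝒳) (T : ℕ) (ω : Ω) : ℝ :=
  (T : ℝ)⁻¹ * ∑ t ∈ Finset.Icc 1 T,
    ({s : ℕ | s ∈ 𝒯 ω ∧ X s ω ∈ A}.indicator (fun _ => (1 : ℝ)) t)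

/-- Limit submeasure `μ̂` of the extended process `(X_t)_{t ∈ 𝒯}`. -/
def limitSubmeasure (X : ℕ → Ω → 𝒳) (𝒯 : Ω → Set ℕ) (A : Set 𝒳) (ω : Ω) : ℝ :=
  Filter.limsup (fun T => avgVisit X 𝒯 A T ω) Filter.atTop

/-- Condition C1 for the extended process `(X_t)_{t ∈ 𝒯}`. -/
def SatisfiesC1 (P : Measure Ω) (X : ℕ → Ω → 𝒳) (𝒯 : Ω → Set ℕ) : Prop :=
  ∀ A : ℕ → Set 𝒳, (∀ k, MeasurableSet (A k)) → Antitone A → (⋂ k, A k) = ∅ →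
    Filter.Tendsto (fun k => ∫ ω, limitSubmeasure X 𝒯 (A k) ω ∂P) Filter.atTop (nhds 0)

/-- `T_i^k = ⌊2^u (1 + v·2^{-i})⌋` where `k = u·2^i + v`, `0 ≤ v < 2^i`. -/
def timeGrid (i k : ℕ) : ℕ :=
  ⌊(2 : ℝ) ^ (k / 2 ^ i) * (1 + ((k % 2 ^ i : ℕ) : ℝ) / (2 ^ i : ℝ))⌋₊

/-- `𝒯^i`: times of first appearance of the instance within its period at scale `i`. -/
def scaleTimes (X : ℕ → Ω → 𝒳) (i : ℕ) (ω : Ω) : Set ℕ :=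
  {t | 1 ≤ t ∧ ∀ k, timeGrid i k ≤ t → t < timeGrid i (k + 1) →
    ∀ t', timeGrid i k ≤ t' → t' < t → X t' ω ≠ X t ω}

/-- Condition C4. -/
def SatisfiesC4 (P : Measure Ω) (X : ℕ → Ω → 𝒳) : Prop :=
  ∀ A : ℕ → Set 𝒳, (∀ i, MeasurableSet (A i)) → Pairwise (Function.onFun Disjoint A) →
    Filter.Tendsto (fun i => ∫ ω, limitSubmeasure X (scaleTimes X i) (A i) ω ∂P)
      Filter.atTop (nhds 0)

/-- Supremum over `T ≥ T₀` of the average visit counts. -/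
def supAvgVisit (X : ℕ → Ω → 𝒳) (𝒯 : Ω → Set ℕ) (A : Set 𝒳) (T₀ : ℕ) (ω : Ω) : ℝ :=
  ⨆ T : {T : ℕ // T₀ ≤ T}, avgVisit X 𝒯 A T ω

/-- Number of sets `A k` visited by the process up to time `T`. -/
def distinctSetCount (X : ℕ → Ω → 𝒳) (A : ℕ → Set 𝒳) (T : ℕ) (ω : Ω) : ℕ :=
  Set.ncard {k : ℕ | ∃ t, 1 ≤ t ∧ t ≤ T ∧ X t ω ∈ A k}

/-- Condition C2. -/
def SatisfiesC2 (P : Measure Ω) (X : ℕ → Ω → 𝒳) : Prop :=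
  ∀ A : ℕ → Set 𝒳, (∀ k, MeasurableSet (A k)) → Pairwise (Function.onFun Disjoint A) →
    ∀ᵐ ω ∂P, Filter.Tendsto (fun T => (distinctSetCount X A T ω : ℝ) / T)
      Filter.atTop (nhds 0)

/-- Condition C5. -/
def SatisfiesC5 (P : Measure Ω) (X : ℕ → Ω → 𝒳) : Prop :=
  ∃ Ti : ℕ → ℕ, Monotone Ti ∧
    SatisfiesC1 P X (fun ω => ⋃ i, scaleTimes X i ω ∩ {t : ℕ | Ti i ≤ t})

/-- `N_t(x) = Σ_{1 ≤ s ≤ t} 1[X_s = x]`, the occurrence count. -/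
def dupCount (X : ℕ → Ω → 𝒳) (t : ℕ) (x : 𝒳) (ω : Ω) : ℕ :=
  Set.ncard {s : ℕ | 1 ≤ s ∧ s ≤ t ∧ X s ω = x}

/-- Condition C8. -/
def SatisfiesC8 (P : Measure Ω) (X : ℕ → Ω → 𝒳) : Prop :=
  ∃ Ψ : ℕ → ℕ, Monotone Ψ ∧ Filter.Tendsto Ψ Filter.atTop Filter.atTop ∧
    ∀ A : ℕ → Set 𝒳, (∀ i, MeasurableSet (A i)) → Antitone A → (⋂ i, A i) = ∅ →
      Filter.Tendsto (fun i => ∫ ω, Filter.limsup (fun T : ℕ => (T : ℝ)⁻¹ *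
          ∑ t ∈ Finset.Icc 1 T,
            ({s : ℕ | X s ω ∈ A i ∧ dupCount X s (X s ω) ω ≤ Ψ T}.indicator
              (fun _ => (1 : ℝ)) t)) Filter.atTop ∂P)
        Filter.atTop (nhds 0)


section AuxUD

variable {X : ℕ → Ω → 𝒳} {𝒯 : Ω → Set ℕ}

lemma indTerm_nonneg (S : Set ℕ) (t : ℕ) : 0 ≤ S.indicator (fun _ => (1:ℝ)) t := by
  classical
  by_cases h : t ∈ S <;> simp [Set.indicator, h]

lemma indTerm_le_one (S : Set ℕ) (t : ℕ) : S.indicator (fun _ => (1:ℝ)) t ≤ 1 := by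
  classical
  by_cases h : t ∈ S <;> simp [Set.indicator, h]

lemma avgVisit_nonneg (A : Set 𝒳) (T : ℕ) (ω : Ω) : 0 ≤ avgVisit X 𝒯 A T ω :=
  mul_nonneg (by positivity) (Finset.sum_nonneg fun t _ => indTerm_nonneg _ t)

lemma avgVisit_le_one (A : Set 𝒳) (T : ℕ) (ω : Ω) : avgVisit X 𝒯 A T ω ≤ 1 := by
  unfold avgVisit
  have h1 : (∑ t ∈ Finset.Icc 1 T,
      ({s : ℕ | s ∈ 𝒯 ω ∧ X s ω ∈ A}.indicator (fun _ => (1:ℝ)) t)) ≤ T := by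
    calc (∑ t ∈ Finset.Icc 1 T,
        ({s : ℕ | s ∈ 𝒯 ω ∧ X s ω ∈ A}.indicator (fun _ => (1:ℝ)) t))
        ≤ ∑ _t ∈ Finset.Icc 1 T, (1:ℝ) :=
          Finset.sum_le_sum fun t _ => indTerm_le_one _ t
      _ = T := by simp
  rcases Nat.eq_zero_or_pos T with h | h
  · simp [h]
  · have hT : (0:ℝ) < T := by exact_mod_cast h
    calc (T:ℝ)⁻¹ * _ ≤ (T:ℝ)⁻¹ * T := mul_le_mul_of_nonneg_left h1 (by positivity)
      _ = 1 := by field_simp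

lemma avgVisit_mono {A B : Set 𝒳} (h : A ⊆ B) (T : ℕ) (ω : Ω) :
    avgVisit X 𝒯 A T ω ≤ avgVisit X 𝒯 B T ω := by
  unfold avgVisit
  refine mul_le_mul_of_nonneg_left (Finset.sum_le_sum fun t _ => ?_) (by positivity)
  refine Set.indicator_le_indicator_of_subset ?_ (fun _ => zero_le_one) t
  exact fun s hs => ⟨hs.1, h hs.2⟩

lemma avgVisit_union_le (A B : Set 𝒳) (T : ℕ) (ω : Ω) :
    avgVisit X 𝒯 (A ∪ B) T ω ≤ avgVisit X 𝒯 A T ω + avgVisit X 𝒯 B T ω := by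
  unfold avgVisit
  rw [← mul_add, ← Finset.sum_add_distrib]
  refine mul_le_mul_of_nonneg_left (Finset.sum_le_sum fun t _ => ?_) (by positivity)
  classical
  by_cases hT : t ∈ 𝒯 ω
  · by_cases hA : X t ω ∈ A <;> by_cases hB : X t ω ∈ B <;>
      simp [Set.indicator, Set.mem_setOf_eq, hT, hA, hB] <;> norm_num
  · simp [Set.indicator, Set.mem_setOf_eq, hT]

lemma avgVisit_empty (T : ℕ) (ω : Ω) : avgVisit X 𝒯 (∅ : Set 𝒳) T ω = 0 := by
  unfold avgVisit
  have : {s : ℕ | s ∈ 𝒯 ω ∧ X s ω ∈ (∅ : Set 𝒳)} = ∅ := by ext s; simp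
  simp [this]

instance (T₀ : ℕ) : Nonempty {T : ℕ // T₀ ≤ T} := ⟨⟨T₀, le_rfl⟩⟩

lemma bddAbove_avgVisit (A : Set 𝒳) (T₀ : ℕ) (ω : Ω) :
    BddAbove (Set.range fun T : {T : ℕ // T₀ ≤ T} => avgVisit X 𝒯 A T.1 ω) := by
  refine ⟨1, ?_⟩; rintro x ⟨T, rfl⟩; exact avgVisit_le_one _ _ _

lemma avgVisit_le_supAvgVisit (A : Set 𝒳) {T₀ T : ℕ} (h : T₀ ≤ T) (ω : Ω) :
    avgVisit X 𝒯 A T ω ≤ supAvgVisit X 𝒯 A T₀ ω :=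
  le_ciSup (bddAbove_avgVisit A T₀ ω) (⟨T, h⟩ : {T : ℕ // T₀ ≤ T})

lemma supAvgVisit_le (A : Set 𝒳) (T₀ : ℕ) (ω : Ω) {c : ℝ}
    (h : ∀ T, T₀ ≤ T → avgVisit X 𝒯 A T ω ≤ c) : supAvgVisit X 𝒯 A T₀ ω ≤ c :=
  ciSup_le fun T => h T.1 T.2

lemma supAvgVisit_nonneg (A : Set 𝒳) (T₀ : ℕ) (ω : Ω) : 0 ≤ supAvgVisit X 𝒯 A T₀ ω :=
  le_trans (avgVisit_nonneg A T₀ ω) (avgVisit_le_supAvgVisit A le_rfl ω)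

lemma supAvgVisit_le_one (A : Set 𝒳) (T₀ : ℕ) (ω : Ω) : supAvgVisit X 𝒯 A T₀ ω ≤ 1 :=
  supAvgVisit_le A T₀ ω fun T _ => avgVisit_le_one A T ω

lemma supAvgVisit_anti (A : Set 𝒳) (ω : Ω) :
    Antitone fun T₀ => supAvgVisit X 𝒯 A T₀ ω := fun k m hkm =>
  supAvgVisit_le A m ω fun T hT => avgVisit_le_supAvgVisit A (le_trans hkm hT) ω

lemma supAvgVisit_mono {A B : Set 𝒳} (h : A ⊆ B) (T₀ : ℕ) (ω : Ω) :
    supAvgVisit X 𝒯 A T₀ ω ≤ supAvgVisit X 𝒯 B T₀ ω :=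
  supAvgVisit_le A T₀ ω fun T hT =>
    le_trans (avgVisit_mono h T ω) (avgVisit_le_supAvgVisit B hT ω)

lemma supAvgVisit_union_le (A B : Set 𝒳) (T₀ : ℕ) (ω : Ω) :
    supAvgVisit X 𝒯 (A ∪ B) T₀ ω ≤ supAvgVisit X 𝒯 A T₀ ω + supAvgVisit X 𝒯 B T₀ ω :=
  supAvgVisit_le _ T₀ ω fun T hT =>
    le_trans (avgVisit_union_le A B T ω)
      (add_le_add (avgVisit_le_supAvgVisit A hT ω) (avgVisit_le_supAvgVisit B hT ω))

lemma isBoundedUnder_le_avg (A : Set 𝒳) (ω : Ω) :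
    IsBoundedUnder (· ≤ ·) atTop (fun T => avgVisit X 𝒯 A T ω) :=
  isBoundedUnder_of ⟨1, fun T => avgVisit_le_one A T ω⟩

lemma isBoundedUnder_ge_avg (A : Set 𝒳) (ω : Ω) :
    IsBoundedUnder (· ≥ ·) atTop (fun T => avgVisit X 𝒯 A T ω) :=
  isBoundedUnder_of ⟨0, fun T => avgVisit_nonneg A T ω⟩

lemma isCoboundedUnder_le_avg (A : Set 𝒳) (ω : Ω) :
    IsCoboundedUnder (· ≤ ·) atTop (fun T => avgVisit X 𝒯 A T ω) :=
  (isBoundedUnder_ge_avg A ω).isCoboundedUnder_le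

lemma bddBelow_supAvgVisit (A : Set 𝒳) (ω : Ω) :
    BddBelow (Set.range fun T₀ : ℕ => supAvgVisit X 𝒯 A T₀ ω) := by
  refine ⟨0, ?_⟩; rintro x ⟨T₀, rfl⟩; exact supAvgVisit_nonneg A T₀ ω

lemma limitSubmeasure_eq_iInf (A : Set 𝒳) (ω : Ω) :
    limitSubmeasure X 𝒯 A ω = ⨅ k : ℕ, supAvgVisit X 𝒯 A k ω := by
  apply le_antisymm
  · refine le_ciInf fun k => ?_
    refine limsup_le_of_le (isCoboundedUnder_le_avg A ω) ?_
    filter_upwards [eventually_ge_atTop k] with T hT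
    exact avgVisit_le_supAvgVisit A hT ω
  · rw [limitSubmeasure, limsup_eq]
    refine le_csInf ⟨1, Filter.Eventually.of_forall fun T => avgVisit_le_one A T ω⟩
      fun a ha => ?_
    rw [Set.mem_setOf_eq, eventually_atTop] at ha
    obtain ⟨k, hk⟩ := ha
    exact le_trans (ciInf_le (bddBelow_supAvgVisit A ω) k)
      (supAvgVisit_le A k ω fun T hT => hk T hT)

lemma tendsto_supAvgVisit (A : Set 𝒳) (ω : Ω) :
    Tendsto (fun k => supAvgVisit X 𝒯 A k ω) atTop
      (nhds (limitSubmeasure X 𝒯 A ω)) := by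
  rw [limitSubmeasure_eq_iInf]
  exact tendsto_atTop_ciInf (supAvgVisit_anti A ω) (bddBelow_supAvgVisit A ω)

lemma limitSubmeasure_nonneg (A : Set 𝒳) (ω : Ω) : 0 ≤ limitSubmeasure X 𝒯 A ω := by
  rw [limitSubmeasure_eq_iInf]
  exact le_ciInf fun k => supAvgVisit_nonneg A k ω

lemma limitSubmeasure_le_one (A : Set 𝒳) (ω : Ω) : limitSubmeasure X 𝒯 A ω ≤ 1 := by
  rw [limitSubmeasure_eq_iInf]
  exact le_trans (ciInf_le (bddBelow_supAvgVisit A ω) 0) (supAvgVisit_le_one A 0 ω)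

lemma limitSubmeasure_mono {A B : Set 𝒳} (h : A ⊆ B) (ω : Ω) :
    limitSubmeasure X 𝒯 A ω ≤ limitSubmeasure X 𝒯 B ω := by
  rw [limitSubmeasure_eq_iInf, limitSubmeasure_eq_iInf]
  exact ciInf_mono (bddBelow_supAvgVisit A ω) fun k => supAvgVisit_mono h k ω

lemma limitSubmeasure_union_le (A B : Set 𝒳) (ω : Ω) :
    limitSubmeasure X 𝒯 (A ∪ B) ω ≤
      limitSubmeasure X 𝒯 A ω + limitSubmeasure X 𝒯 B ω := by
  have h := limsup_add_le (f := (atTop : Filter ℕ))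
    (u := fun T => avgVisit X 𝒯 A T ω) (v := fun T => avgVisit X 𝒯 B T ω)
    (isBoundedUnder_ge_avg A ω) (isBoundedUnder_le_avg A ω)
    (isCoboundedUnder_le_avg B ω) (isBoundedUnder_le_avg B ω)
  refine le_trans (le_trans ?_ h) le_rfl
  refine limsup_le_limsup (Filter.Eventually.of_forall fun T => ?_)
    (isCoboundedUnder_le_avg _ ω)
    (isBoundedUnder_of ⟨2, fun T => ?_⟩)
  · exact avgVisit_union_le A B T ω
  · have h1 := avgVisit_le_one (X := X) (𝒯 := 𝒯) A T ω
    have h2 := avgVisit_le_one (X := X) (𝒯 := 𝒯) B T ω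
    simp only [Pi.add_apply]
    linarith

lemma limitSubmeasure_empty (ω : Ω) : limitSubmeasure X 𝒯 (∅ : Set 𝒳) ω = 0 := by
  unfold limitSubmeasure
  have : (fun T => avgVisit X 𝒯 (∅ : Set 𝒳) T ω) = fun _ => (0:ℝ) := by
    funext T; exact avgVisit_empty T ω
  rw [this, limsup_const]

lemma limitSubmeasure_biUnion_le (C : ℕ → Set 𝒳) (s : Finset ℕ) (ω : Ω) :
    limitSubmeasure X 𝒯 (⋃ k ∈ s, C k) ω ≤ ∑ k ∈ s, limitSubmeasure X 𝒯 (C k) ω := by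
  classical
  induction s using Finset.induction with
  | empty => simp [limitSubmeasure_empty]
  | insert a s hnotmem ih =>
    rw [Finset.set_biUnion_insert, Finset.sum_insert hnotmem]
    exact le_trans (limitSubmeasure_union_le _ _ ω) (add_le_add_right ih _)

lemma measurable_avgVisit (hX : ∀ t, Measurable (X t))
    (h𝒯 : ∀ t, MeasurableSet {ω | t ∈ 𝒯 ω}) {A : Set 𝒳} (hA : MeasurableSet A) (T : ℕ) :
    Measurable (fun ω => avgVisit X 𝒯 A T ω) := by
  unfold avgVisit
  apply Measurable.const_mul
  apply Finset.measurable_sum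
  intro t _
  have heq : (fun ω => ({s : ℕ | s ∈ 𝒯 ω ∧ X s ω ∈ A}.indicator (fun _ => (1:ℝ)) t))
      = ({ω | t ∈ 𝒯 ω} ∩ (X t) ⁻¹' A).indicator (fun _ => (1:ℝ)) := by
    funext ω
    by_cases h1 : t ∈ 𝒯 ω <;> by_cases h2 : X t ω ∈ A <;>
      simp [Set.indicator, Set.mem_setOf_eq, h1, h2]
  rw [heq]
  exact measurable_const.indicator ((h𝒯 t).inter ((hX t) hA))

lemma measurable_supAvgVisit (hX : ∀ t, Measurable (X t))
    (h𝒯 : ∀ t, MeasurableSet {ω | t ∈ 𝒯 ω}) {A : Set 𝒳} (hA : MeasurableSet A) (T₀ : ℕ) :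
    Measurable (fun ω => supAvgVisit X 𝒯 A T₀ ω) :=
  Measurable.iSup fun T => measurable_avgVisit hX h𝒯 hA T.1

lemma measurable_limitSubmeasure (hX : ∀ t, Measurable (X t))
    (h𝒯 : ∀ t, MeasurableSet {ω | t ∈ 𝒯 ω}) {A : Set 𝒳} (hA : MeasurableSet A) :
    Measurable (fun ω => limitSubmeasure X 𝒯 A ω) :=
  Measurable.limsup fun T => measurable_avgVisit hX h𝒯 hA T

lemma integrable_of_zero_one {f : Ω → ℝ} (P : Measure Ω) [IsProbabilityMeasure P]
    (hm : Measurable f) (h0 : ∀ ω, 0 ≤ f ω) (h1 : ∀ ω, f ω ≤ 1) : Integrable f P := by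
  refine (integrable_const (1:ℝ)).mono' hm.aestronglyMeasurable
    (Filter.Eventually.of_forall fun ω => ?_)
  rw [Real.norm_eq_abs, abs_le]
  constructor
  · linarith [h0 ω]
  · simpa using h1 ω

lemma integrable_limitSubmeasure (P : Measure Ω) [IsProbabilityMeasure P]
    (hX : ∀ t, Measurable (X t)) (h𝒯 : ∀ t, MeasurableSet {ω | t ∈ 𝒯 ω})
    {A : Set 𝒳} (hA : MeasurableSet A) :
    Integrable (fun ω => limitSubmeasure X 𝒯 A ω) P :=
  integrable_of_zero_one P (measurable_limitSubmeasure hX h𝒯 hA)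
    (limitSubmeasure_nonneg A) (limitSubmeasure_le_one A)

lemma integrable_supAvgVisit (P : Measure Ω) [IsProbabilityMeasure P]
    (hX : ∀ t, Measurable (X t)) (h𝒯 : ∀ t, MeasurableSet {ω | t ∈ 𝒯 ω})
    {A : Set 𝒳} (hA : MeasurableSet A) (T₀ : ℕ) :
    Integrable (fun ω => supAvgVisit X 𝒯 A T₀ ω) P :=
  integrable_of_zero_one P (measurable_supAvgVisit hX h𝒯 hA T₀)
    (supAvgVisit_nonneg A T₀) (supAvgVisit_le_one A T₀)

lemma tendsto_integral_supAvgVisit (P : Measure Ω) [IsProbabilityMeasure P]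
    (hX : ∀ t, Measurable (X t)) (h𝒯 : ∀ t, MeasurableSet {ω | t ∈ 𝒯 ω})
    {A : Set 𝒳} (hA : MeasurableSet A) :
    Tendsto (fun k => ∫ ω, supAvgVisit X 𝒯 A k ω ∂P) atTop
      (nhds (∫ ω, limitSubmeasure X 𝒯 A ω ∂P)) := by
  refine tendsto_integral_of_dominated_convergence (fun _ => (1:ℝ))
    (fun k => (measurable_supAvgVisit hX h𝒯 hA k).aestronglyMeasurable)
    (integrable_const 1)
    (fun k => Filter.Eventually.of_forall fun ω => ?_)
    (Filter.Eventually.of_forall fun ω => tendsto_supAvgVisit A ω)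
  rw [Real.norm_eq_abs, abs_le]
  refine ⟨?_, supAvgVisit_le_one A k ω⟩
  show (-1:ℝ) ≤ supAvgVisit X 𝒯 A k ω
  linarith [supAvgVisit_nonneg (X := X) (𝒯 := 𝒯) A k ω]

end AuxUD


/-- uniform deviations for C1 extended processes
(Lemma `uniform_deviations`). -/
theorem stmt0 [TopologicalSpace 𝒳] [TopologicalSpace.SeparableSpace 𝒳]
    [TopologicalSpace.MetrizableSpace 𝒳] [BorelSpace 𝒳]
    (P : Measure Ω) [IsProbabilityMeasure P]
    (X : ℕ → Ω → 𝒳) (hX : ∀ t, Measurable (X t))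
    (𝒯 : Ω → Set ℕ) (h𝒯 : ∀ t, MeasurableSet {ω | t ∈ 𝒯 ω})
    (hC1 : SatisfiesC1 P X 𝒯) :
    ∀ ε : ℝ, 0 < ε → ∃ Tε : ℕ, 1 ≤ Tε ∧ ∃ δ : ℝ, 0 < δ ∧
      ∀ A : Set 𝒳, MeasurableSet A →
        (∫ ω, limitSubmeasure X 𝒯 A ω ∂P) ≤ δ →
        (∫ ω, supAvgVisit X 𝒯 A Tε ω ∂P) ≤ ε := by
  intro ε hε
  by_contra hcon
  push_neg at hcon
  choose A hAmeas hAsmall hAbig using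
    fun k : ℕ => hcon (k+1) (Nat.le_add_left 1 k) ((1/2:ℝ)^k) (by positivity)
  set B : ℕ → Set 𝒳 := fun m => ⋃ k, A (m + k) with hB
  set Binf : Set 𝒳 := ⋂ m, B m with hBinfdef
  have hBmeas : ∀ m, MeasurableSet (B m) := fun m =>
    MeasurableSet.iUnion fun k => hAmeas (m + k)
  have hBinfmeas : MeasurableSet Binf := MeasurableSet.iInter fun m => hBmeas m
  have hAsubB : ∀ {m k : ℕ}, m ≤ k → A k ⊆ B m := by
    intro m k hmk x hx
    exact Set.mem_iUnion.2 ⟨k - m, by rwa [Nat.add_sub_cancel' hmk]⟩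
  have hBanti : Antitone B := by
    intro m m' hmm' x hx
    obtain ⟨k, hk⟩ := Set.mem_iUnion.1 hx
    exact hAsubB (le_trans hmm' (Nat.le_add_right m' k)) hk
  have hBinfsubB : ∀ m, Binf ⊆ B m := fun m => Set.iInter_subset B m
  -- apply C1 to the sets B m \ Binf
  have hGanti : Antitone (fun m => B m \ Binf) := fun m m' h =>
    Set.diff_subset_diff_left (hBanti h)
  have hGempty : (⋂ m, B m \ Binf) = ∅ := by
    rw [Set.eq_empty_iff_forall_notMem]
    intro x hx
    rw [Set.mem_iInter] at hx
    exact (hx 0).2 (Set.mem_iInter.2 fun m => (hx m).1)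
  have hGtend := hC1 (fun m => B m \ Binf)
    (fun m => (hBmeas m).diff hBinfmeas) hGanti hGempty
  set I : ℝ := ∫ ω, limitSubmeasure X 𝒯 Binf ω ∂P with hIdef
  set c : ℕ → ℝ := fun m => ∫ ω, limitSubmeasure X 𝒯 (B m \ Binf) ω ∂P with hcdef
  -- Step B : ∀ m, ε ≤ I + c m
  have hstepB : ∀ m, ε ≤ I + c m := by
    intro m
    have htend : Tendsto (fun k : ℕ => (∫ ω, supAvgVisit X 𝒯 Binf (k+1) ω ∂P)
        + ∫ ω, supAvgVisit X 𝒯 (B m \ Binf) (k+1) ω ∂P) atTop (nhds (I + c m)) :=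
      Tendsto.add
        ((tendsto_integral_supAvgVisit P hX h𝒯 hBinfmeas).comp (tendsto_add_atTop_nat 1))
        ((tendsto_integral_supAvgVisit P hX h𝒯
          ((hBmeas m).diff hBinfmeas)).comp (tendsto_add_atTop_nat 1))
    refine ge_of_tendsto htend ?_
    filter_upwards [eventually_ge_atTop m] with k hk
    refine le_trans (hAbig k).le ?_
    have hpt : ∀ ω, supAvgVisit X 𝒯 (A k) (k+1) ω ≤
        supAvgVisit X 𝒯 Binf (k+1) ω + supAvgVisit X 𝒯 (B m \ Binf) (k+1) ω := by
      intro ω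
      have hsub : A k ⊆ Binf ∪ (B m \ Binf) := by
        intro x hx
        by_cases hxB : x ∈ Binf
        · exact Or.inl hxB
        · exact Or.inr ⟨hAsubB hk hx, hxB⟩
      exact le_trans (supAvgVisit_mono hsub _ ω) (supAvgVisit_union_le _ _ _ ω)
    calc ∫ ω, supAvgVisit X 𝒯 (A k) (k+1) ω ∂P
        ≤ ∫ ω, (supAvgVisit X 𝒯 Binf (k+1) ω
            + supAvgVisit X 𝒯 (B m \ Binf) (k+1) ω) ∂P :=
          integral_mono (integrable_supAvgVisit P hX h𝒯 (hAmeas k) (k+1))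
            ((integrable_supAvgVisit P hX h𝒯 hBinfmeas (k+1)).add
              (integrable_supAvgVisit P hX h𝒯 ((hBmeas m).diff hBinfmeas) (k+1))) hpt
      _ = _ := integral_add (integrable_supAvgVisit P hX h𝒯 hBinfmeas (k+1))
          (integrable_supAvgVisit P hX h𝒯 ((hBmeas m).diff hBinfmeas) (k+1))
  have hεI : ε ≤ I := by
    have htend2 : Tendsto (fun m => I + c m) atTop (nhds (I + 0)) :=
      tendsto_const_nhds.add hGtend
    rw [add_zero] at htend2
    exact ge_of_tendsto htend2 (Filter.Eventually.of_forall hstepB)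
  -- Step A : I ≤ η for all η > 0
  have hstepA : ∀ η : ℝ, 0 < η → I ≤ η := by
    intro η hη
    obtain ⟨m, hm⟩ := exists_pow_lt_of_lt_one (show (0:ℝ) < η/4 by linarith)
      (by norm_num : (1/2:ℝ) < 1)
    set U : ℕ → Set 𝒳 := fun M => ⋃ k ∈ Finset.range (M+1), A (m+k) with hUdef
    have hUmeas : ∀ M, MeasurableSet (U M) := fun M =>
      (Finset.range (M+1)).measurableSet_biUnion fun k _ => hAmeas (m+k)
    have hUmono : Monotone U := by
      intro M M' h x hx
      simp only [hUdef, Set.mem_iUnion, exists_prop] at hx ⊢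
      obtain ⟨k, hk, hxk⟩ := hx
      exact ⟨k, Finset.mem_range.2 (lt_of_lt_of_le (Finset.mem_range.1 hk) (by omega)), hxk⟩
    set F : ℕ → Set 𝒳 := fun M => Binf \ U M with hFdef
    have hFmeas : ∀ M, MeasurableSet (F M) := fun M => hBinfmeas.diff (hUmeas M)
    have hFanti : Antitone F := fun M M' h => Set.diff_subset_diff_right (hUmono h)
    have hFempty : (⋂ M, F M) = ∅ := by
      rw [Set.eq_empty_iff_forall_notMem]
      intro x hx
      rw [Set.mem_iInter] at hx
      have hxBinf : x ∈ Binf := (hx 0).1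
      obtain ⟨k, hk⟩ := Set.mem_iUnion.1 (hBinfsubB m hxBinf)
      exact (hx k).2 (Set.mem_biUnion (Finset.self_mem_range_succ k) hk)
    have hFtend := hC1 F hFmeas hFanti hFempty
    obtain ⟨M, hM⟩ := ((tendsto_order.1 hFtend).2 (η/2) (by linarith)).exists
    have hpt : ∀ ω, limitSubmeasure X 𝒯 Binf ω ≤
        (∑ k ∈ Finset.range (M+1), limitSubmeasure X 𝒯 (A (m+k)) ω)
          + limitSubmeasure X 𝒯 (F M) ω := by
      intro ω
      have hsub : Binf ⊆ U M ∪ F M := fun x hx => by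
        by_cases hxU : x ∈ U M
        · exact Or.inl hxU
        · exact Or.inr ⟨hx, hxU⟩
      refine le_trans (limitSubmeasure_mono hsub ω) ?_
      refine le_trans (limitSubmeasure_union_le _ _ ω) (add_le_add_left ?_ _)
      exact limitSubmeasure_biUnion_le (fun k => A (m+k)) (Finset.range (M+1)) ω
    have hint : I ≤ (∑ k ∈ Finset.range (M+1), ∫ ω, limitSubmeasure X 𝒯 (A (m+k)) ω ∂P)
        + ∫ ω, limitSubmeasure X 𝒯 (F M) ω ∂P := by
      calc I ≤ ∫ ω, ((∑ k ∈ Finset.range (M+1), limitSubmeasure X 𝒯 (A (m+k)) ω)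
            + limitSubmeasure X 𝒯 (F M) ω) ∂P :=
          integral_mono (integrable_limitSubmeasure P hX h𝒯 hBinfmeas)
            ((integrable_finset_sum _ fun k _ =>
              integrable_limitSubmeasure P hX h𝒯 (hAmeas (m+k))).add
              (integrable_limitSubmeasure P hX h𝒯 (hFmeas M))) hpt
        _ = _ := by
            rw [integral_add (integrable_finset_sum _ fun k _ =>
                integrable_limitSubmeasure P hX h𝒯 (hAmeas (m+k)))
              (integrable_limitSubmeasure P hX h𝒯 (hFmeas M)),
              integral_finset_sum _ (fun k _ =>
                integrable_limitSubmeasure P hX h𝒯 (hAmeas (m+k)))]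
    have hsum : (∑ k ∈ Finset.range (M+1),
        ∫ ω, limitSubmeasure X 𝒯 (A (m+k)) ω ∂P) ≤ η/2 := by
      calc (∑ k ∈ Finset.range (M+1), ∫ ω, limitSubmeasure X 𝒯 (A (m+k)) ω ∂P)
          ≤ ∑ k ∈ Finset.range (M+1), (1/2:ℝ)^(m+k) :=
            Finset.sum_le_sum fun k _ => hAsmall (m+k)
        _ = (1/2:ℝ)^m * ∑ k ∈ Finset.range (M+1), (1/2:ℝ)^k := by
            rw [Finset.mul_sum]
            exact Finset.sum_congr rfl fun k _ => pow_add _ m k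
        _ ≤ (1/2:ℝ)^m * 2 :=
            mul_le_mul_of_nonneg_left (sum_geometric_two_le _) (by positivity)
        _ ≤ η/2 := by nlinarith [hm]
    linarith [hint, hsum, hM.le]
  have hI0 : I ≤ 0 := by
    by_contra hpos
    push_neg at hpos
    linarith [hstepA (I/2) (by linarith)]
  linarith
end
end

section
/- Let 𝒳 be a separable metrizable space with its Borel σ-algebra and 𝕏 a stochastic process on 𝒳. Then 𝕏 satisfies condition C4 if and only if for every decreasing sequence (A_i)_{i≥1} of measurable subsets of 𝒳 with ∩_i A_i = ∅, one has sup_{p≥0} E[ limsup_{T→∞} (1/T) Σ_{t≤T, t∈𝒯^p} 1_{A_i}(X_t) ] → 0 as i → ∞. -/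
open MeasureTheory Filter Set Topology

noncomputable section

variable {Ω : Type*} [MeasurableSpace Ω] {𝒳 : Type*} [MeasurableSpace 𝒳]

section Aux

variable {X : ℕ → Ω → 𝒳} {𝒯 𝒯' : Ω → Set ℕ} {A A' C : Set 𝒳} {T : ℕ} {ω : Ω}

lemma aux_avg_nonneg : 0 ≤ avgVisit X 𝒯 A T ω := by
  apply mul_nonneg (by positivity)
  exact Finset.sum_nonneg fun t _ => Set.indicator_nonneg (fun _ _ => zero_le_one) t

lemma aux_avg_le_one : avgVisit X 𝒯 A T ω ≤ 1 := by
  rcases Nat.eq_zero_or_pos T with hT | hT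
  · simp [avgVisit, hT]
  · have hsum : ∑ t ∈ Finset.Icc 1 T,
        ({s : ℕ | s ∈ 𝒯 ω ∧ X s ω ∈ A}.indicator (fun _ => (1 : ℝ)) t) ≤ (T : ℝ) := by
      calc ∑ t ∈ Finset.Icc 1 T,
          ({s : ℕ | s ∈ 𝒯 ω ∧ X s ω ∈ A}.indicator (fun _ => (1 : ℝ)) t)
          ≤ ∑ _t ∈ Finset.Icc 1 T, (1 : ℝ) := by
            refine Finset.sum_le_sum fun t _ => ?_
            exact Set.indicator_apply_le' (fun _ => le_refl 1) (fun _ => zero_le_one)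
        _ = (T : ℝ) := by simp [Nat.card_Icc]
    rw [avgVisit, inv_mul_le_iff₀ (by exact_mod_cast hT)]
    simpa using hsum

lemma aux_avg_mono
    (h : ∀ t ∈ Finset.Icc 1 T, t ∈ 𝒯 ω ∧ X t ω ∈ A → t ∈ 𝒯' ω ∧ X t ω ∈ A') :
    avgVisit X 𝒯 A T ω ≤ avgVisit X 𝒯' A' T ω := by
  refine mul_le_mul_of_nonneg_left ?_ (by positivity)
  refine Finset.sum_le_sum fun t ht => ?_
  by_cases hm : t ∈ {s : ℕ | s ∈ 𝒯 ω ∧ X s ω ∈ A}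
  · rw [Set.indicator_of_mem hm]
    exact le_of_eq (Set.indicator_of_mem
      (show t ∈ {s : ℕ | s ∈ 𝒯' ω ∧ X s ω ∈ A'} from h t ht hm) (fun _ => (1:ℝ))).symm
  · rw [Set.indicator_of_notMem hm]
    exact Set.indicator_nonneg (fun _ _ => zero_le_one) t

lemma aux_avg_subadd :
    avgVisit X 𝒯 A T ω ≤ avgVisit X 𝒯 (A \ C) T ω + avgVisit X 𝒯 C T ω := by
  unfold avgVisit
  rw [← mul_add, ← Finset.sum_add_distrib]
  refine mul_le_mul_of_nonneg_left ?_ (by positivity)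
  refine Finset.sum_le_sum fun t _ => ?_
  by_cases h1 : t ∈ 𝒯 ω ∧ X t ω ∈ A
  · rw [Set.indicator_of_mem (by exact h1 : t ∈ {s : ℕ | s ∈ 𝒯 ω ∧ X s ω ∈ A})]
    by_cases h2 : X t ω ∈ C
    · have : t ∈ {s : ℕ | s ∈ 𝒯 ω ∧ X s ω ∈ C} := ⟨h1.1, h2⟩
      rw [Set.indicator_of_mem this]
      have h0 : (0:ℝ) ≤ ({s : ℕ | s ∈ 𝒯 ω ∧ X s ω ∈ A \ C}.indicator (fun _ => (1:ℝ)) t) :=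
        Set.indicator_nonneg (fun _ _ => zero_le_one) t
      linarith
    · have : t ∈ {s : ℕ | s ∈ 𝒯 ω ∧ X s ω ∈ A \ C} := ⟨h1.1, h1.2, h2⟩
      rw [Set.indicator_of_mem this]
      have h0 : (0:ℝ) ≤ ({s : ℕ | s ∈ 𝒯 ω ∧ X s ω ∈ C}.indicator (fun _ => (1:ℝ)) t) :=
        Set.indicator_nonneg (fun _ _ => zero_le_one) t
      linarith
  · rw [Set.indicator_of_notMem (by exact h1 : t ∉ {s : ℕ | s ∈ 𝒯 ω ∧ X s ω ∈ A})]
    have h0 : (0:ℝ) ≤ ({s : ℕ | s ∈ 𝒯 ω ∧ X s ω ∈ A \ C}.indicator (fun _ => (1:ℝ)) t) :=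
      Set.indicator_nonneg (fun _ _ => zero_le_one) t
    have h0' : (0:ℝ) ≤ ({s : ℕ | s ∈ 𝒯 ω ∧ X s ω ∈ C}.indicator (fun _ => (1:ℝ)) t) :=
      Set.indicator_nonneg (fun _ _ => zero_le_one) t
    linarith

lemma aux_bdd : IsBoundedUnder (· ≤ ·) atTop (fun T => avgVisit X 𝒯 A T ω) :=
  isBoundedUnder_of ⟨1, fun _ => aux_avg_le_one⟩

lemma aux_bdd_ge : IsBoundedUnder (· ≥ ·) atTop (fun T => avgVisit X 𝒯 A T ω) :=
  isBoundedUnder_of ⟨0, fun _ => aux_avg_nonneg⟩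

lemma aux_cobdd : IsCoboundedUnder (· ≤ ·) atTop (fun T => avgVisit X 𝒯 A T ω) :=
  aux_bdd_ge.isCoboundedUnder_le

lemma aux_ls_nonneg : 0 ≤ limitSubmeasure X 𝒯 A ω :=
  Filter.le_limsup_of_frequently_le (Frequently.of_forall fun _ => aux_avg_nonneg) aux_bdd

lemma aux_ls_le_one : limitSubmeasure X 𝒯 A ω ≤ 1 :=
  Filter.limsup_le_of_le aux_cobdd (Eventually.of_forall fun _ => aux_avg_le_one)

lemma aux_ls_mono (h : ∀ t, t ∈ 𝒯 ω ∧ X t ω ∈ A → t ∈ 𝒯' ω ∧ X t ω ∈ A') :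
    limitSubmeasure X 𝒯 A ω ≤ limitSubmeasure X 𝒯' A' ω :=
  Filter.limsup_le_limsup
    (Eventually.of_forall fun T => aux_avg_mono (fun t _ => h t)) aux_cobdd aux_bdd

lemma aux_ls_subadd :
    limitSubmeasure X 𝒯 A ω ≤ limitSubmeasure X 𝒯 (A \ C) ω + limitSubmeasure X 𝒯 C ω := by
  calc limitSubmeasure X 𝒯 A ω
      ≤ limsup ((fun T => avgVisit X 𝒯 (A \ C) T ω) + (fun T => avgVisit X 𝒯 C T ω)) atTop := by
        refine Filter.limsup_le_limsup (Eventually.of_forall fun T => aux_avg_subadd)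
          aux_cobdd ?_
        exact isBoundedUnder_of ⟨2, fun T => by
          have := @aux_avg_le_one Ω _ 𝒳 _ X 𝒯 (A \ C) T ω
          have := @aux_avg_le_one Ω _ 𝒳 _ X 𝒯 C T ω
          simp only [Pi.add_apply]; linarith⟩
    _ ≤ _ := limsup_add_le aux_bdd_ge aux_bdd aux_cobdd aux_bdd

end Aux

lemma aux_timeGrid_double (i k : ℕ) : timeGrid (i+1) (2*k) = timeGrid i k := by
  unfold timeGrid
  have h1 : 2*k / 2^(i+1) = k / 2^i := by
    rw [pow_succ, mul_comm ((2:ℕ)^i) 2, Nat.mul_div_mul_left _ _ (by norm_num)]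
  have h2 : 2*k % 2^(i+1) = 2*(k % 2^i) := by
    rw [pow_succ, mul_comm ((2:ℕ)^i) 2, Nat.mul_mod_mul_left]
  rw [h1, h2]
  congr 1
  have hne : ((2:ℝ)^i) ≠ 0 := by positivity
  push_cast
  field_simp
  ring

lemma aux_timeGrid_mono (i : ℕ) : Monotone (timeGrid i) := by
  apply monotone_nat_of_le_succ
  intro k
  unfold timeGrid
  apply Nat.floor_mono
  have hmpos : 0 < 2^i := Nat.pow_pos (by norm_num)
  obtain ⟨u, v, hv, rfl⟩ : ∃ u v, v < 2^i ∧ k = 2^i*u + v :=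
    ⟨k/2^i, k%2^i, Nat.mod_lt _ hmpos, (Nat.div_add_mod k (2^i)).symm⟩
  have hdiv : (2^i*u+v)/2^i = u := by
    rw [Nat.mul_add_div hmpos, Nat.div_eq_of_lt hv, Nat.add_zero]
  have hmod : (2^i*u+v) % 2^i = v := by
    rw [Nat.mul_add_mod, Nat.mod_eq_of_lt hv]
  rw [hdiv, hmod]
  rcases Nat.lt_or_ge (v+1) (2^i) with hc | hc
  · have hdiv' : (2^i*u+v+1)/2^i = u := by
      rw [add_assoc, Nat.mul_add_div hmpos, Nat.div_eq_of_lt hc, Nat.add_zero]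
    have hmod' : (2^i*u+v+1) % 2^i = v + 1 := by
      rw [add_assoc, Nat.mul_add_mod, Nat.mod_eq_of_lt hc]
    rw [hdiv', hmod']
    push_cast
    gcongr
    linarith
  · have hveq : v + 1 = 2^i := by omega
    have hdiv' : (2^i*u+v+1)/2^i = u+1 := by
      have : 2^i*u+v+1 = 2^i*(u+1) := by rw [Nat.mul_add]; omega
      rw [this, Nat.mul_div_cancel_left _ hmpos]
    have hmod' : (2^i*u+v+1) % 2^i = 0 := by
      have : 2^i*u+v+1 = 2^i*(u+1) := by rw [Nat.mul_add]; omega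
      rw [this, Nat.mul_mod_right]
    rw [hdiv', hmod']
    have hR : (0:ℝ) < (2:ℝ)^i := by positivity
    have hp : (0:ℝ) ≤ (2:ℝ)^u := by positivity
    push_cast
    simp only [zero_div, add_zero, mul_one]
    have h1 : (v:ℝ) ≤ (2:ℝ)^i := by exact_mod_cast hv.le
    have h2 : (v:ℝ)/((2:ℝ)^i) ≤ 1 := by rw [div_le_one hR]; exact h1
    rw [pow_succ]
    exact mul_le_mul_of_nonneg_left (by linarith) hp

lemma aux_scaleTimes_mono (X : ℕ → Ω → 𝒳) (ω : Ω) {i i' : ℕ} (h : i ≤ i') :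
    scaleTimes X i ω ⊆ scaleTimes X i' ω := by
  induction i' with
  | zero => simp_all
  | succ n ih =>
    rcases Nat.lt_or_ge i (n+1) with hlt | hge
    · refine (ih (by omega)).trans ?_
      rintro t ⟨ht1, H⟩
      refine ⟨ht1, fun k' h1 h2 t' h3 h4 => ?_⟩
      have e1 : timeGrid (n+1) (2*(k'/2)) = timeGrid n (k'/2) := aux_timeGrid_double _ _
      have l1 : timeGrid (n+1) (2*(k'/2)) ≤ timeGrid (n+1) k' :=
        aux_timeGrid_mono _ (by omega)
      have l2 : timeGrid (n+1) (k'+1) ≤ timeGrid (n+1) (2*(k'/2)+2) :=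
        aux_timeGrid_mono _ (by omega)
      have e2 : timeGrid (n+1) (2*(k'/2)+2) = timeGrid n (k'/2+1) := by
        rw [show 2*(k'/2)+2 = 2*(k'/2+1) by ring]
        exact aux_timeGrid_double _ _
      exact H (k'/2) (by omega) (by omega) t' (by omega) h4
    · have : i = n+1 := by omega
      subst this; exact fun t ht => ht

section Meas

variable [TopologicalSpace 𝒳] [TopologicalSpace.SeparableSpace 𝒳]
  [TopologicalSpace.MetrizableSpace 𝒳] [BorelSpace 𝒳]
  {X : ℕ → Ω → 𝒳} {A : Set 𝒳}

lemma aux_secondCountable : SecondCountableTopology 𝒳 := by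
  letI := TopologicalSpace.pseudoMetrizableSpacePseudoMetric 𝒳
  exact UniformSpace.secondCountable_of_separable 𝒳

lemma aux_mem_scaleTimes_meas (hX : ∀ t, Measurable (X t)) (i t : ℕ) :
    MeasurableSet {ω | t ∈ scaleTimes X i ω} := by
  haveI : SecondCountableTopology 𝒳 := aux_secondCountable
  have hset : {ω | t ∈ scaleTimes X i ω} =
      {ω : Ω | 1 ≤ t} ∩ ⋂ (k : ℕ), ⋂ (_ : timeGrid i k ≤ t), ⋂ (_ : t < timeGrid i (k+1)),
        ⋂ (t' : ℕ), ⋂ (_ : timeGrid i k ≤ t'), ⋂ (_ : t' < t),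
          {ω | X t' ω = X t ω}ᶜ := by
    ext ω
    simp only [scaleTimes, Set.mem_setOf_eq, Set.mem_inter_iff, Set.mem_iInter,
      Set.mem_compl_iff]
    all_goals tauto
  rw [hset]
  refine MeasurableSet.inter ?_ ?_
  · by_cases h : 1 ≤ t
    · have he : {ω : Ω | 1 ≤ t} = Set.univ := by ext ω; simp [h]
      rw [he]; exact MeasurableSet.univ
    · have he : {ω : Ω | 1 ≤ t} = ∅ := by ext ω; simp [h]
      rw [he]; exact MeasurableSet.empty
  · refine MeasurableSet.iInter fun k => MeasurableSet.iInter fun _ =>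
      MeasurableSet.iInter fun _ => MeasurableSet.iInter fun t' =>
      MeasurableSet.iInter fun _ => MeasurableSet.iInter fun _ => ?_
    exact ((hX t').stronglyMeasurable.measurableSet_eq_fun (hX t).stronglyMeasurable).compl

lemma aux_avg_meas (hX : ∀ t, Measurable (X t)) (hA : MeasurableSet A) (i T : ℕ) :
    Measurable (avgVisit X (scaleTimes X i) A T) := by
  apply Measurable.const_mul
  apply Finset.measurable_sum
  intro t _
  have hrw : (fun ω => ({s : ℕ | s ∈ scaleTimes X i ω ∧ X s ω ∈ A}.indicator
      (fun _ => (1:ℝ)) t))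
      = ({ω : Ω | t ∈ scaleTimes X i ω ∧ X t ω ∈ A}).indicator (fun _ => (1:ℝ)) := by
    ext ω
    by_cases h : t ∈ scaleTimes X i ω ∧ X t ω ∈ A
    · rw [Set.indicator_of_mem (show t ∈ {s : ℕ | s ∈ scaleTimes X i ω ∧ X s ω ∈ A} from h),
        Set.indicator_of_mem (show ω ∈ {ω : Ω | t ∈ scaleTimes X i ω ∧ X t ω ∈ A} from h)]
    · rw [Set.indicator_of_notMem (show t ∉ {s : ℕ | s ∈ scaleTimes X i ω ∧ X s ω ∈ A} from h),
        Set.indicator_of_notMem (show ω ∉ {ω : Ω | t ∈ scaleTimes X i ω ∧ X t ω ∈ A} from h)]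
  rw [hrw]
  exact Measurable.indicator measurable_const
    ((aux_mem_scaleTimes_meas hX i t).inter ((hX t) hA))

lemma aux_ls_meas (hX : ∀ t, Measurable (X t)) (hA : MeasurableSet A) (i : ℕ) :
    Measurable (limitSubmeasure X (scaleTimes X i) A) :=
  Measurable.limsup (fun T => aux_avg_meas hX hA i T)

end Meas


section Nu

variable [TopologicalSpace 𝒳] [TopologicalSpace.SeparableSpace 𝒳]
  [TopologicalSpace.MetrizableSpace 𝒳] [BorelSpace 𝒳]
  {X : ℕ → Ω → 𝒳} {A A' : Set 𝒳} (P : Measure Ω) [IsProbabilityMeasure P]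

lemma aux_ls_integrable (hX : ∀ t, Measurable (X t)) (hA : MeasurableSet A) (i : ℕ) :
    Integrable (limitSubmeasure X (scaleTimes X i) A) P := by
  refine (integrable_const (1:ℝ)).mono' ((aux_ls_meas hX hA i).aestronglyMeasurable) ?_
  refine Eventually.of_forall fun ω => ?_
  rw [Real.norm_eq_abs, abs_le]
  exact ⟨by linarith [@aux_ls_nonneg Ω _ 𝒳 _ X (scaleTimes X i) A ω], aux_ls_le_one⟩

lemma aux_nu_nonneg (i : ℕ) :
    0 ≤ ∫ ω, limitSubmeasure X (scaleTimes X i) A ω ∂P :=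
  integral_nonneg fun _ => aux_ls_nonneg

lemma aux_nu_le_one (hX : ∀ t, Measurable (X t)) (hA : MeasurableSet A) (i : ℕ) :
    ∫ ω, limitSubmeasure X (scaleTimes X i) A ω ∂P ≤ 1 := by
  calc ∫ ω, limitSubmeasure X (scaleTimes X i) A ω ∂P
      ≤ ∫ _ω, (1:ℝ) ∂P :=
        integral_mono (aux_ls_integrable P hX hA i) (integrable_const 1)
          fun _ => aux_ls_le_one
    _ = 1 := by simp

lemma aux_nu_mono_set (hX : ∀ t, Measurable (X t)) (hA : MeasurableSet A)
    (hA' : MeasurableSet A') (i : ℕ) (hsub : A ⊆ A') :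
    ∫ ω, limitSubmeasure X (scaleTimes X i) A ω ∂P
      ≤ ∫ ω, limitSubmeasure X (scaleTimes X i) A' ω ∂P :=
  integral_mono (aux_ls_integrable P hX hA i) (aux_ls_integrable P hX hA' i)
    fun _ => aux_ls_mono (fun _ ht => ⟨ht.1, hsub ht.2⟩)

lemma aux_nu_mono_scale (hX : ∀ t, Measurable (X t)) (hA : MeasurableSet A)
    {i i' : ℕ} (h : i ≤ i') :
    ∫ ω, limitSubmeasure X (scaleTimes X i) A ω ∂P
      ≤ ∫ ω, limitSubmeasure X (scaleTimes X i') A ω ∂P :=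
  integral_mono (aux_ls_integrable P hX hA i) (aux_ls_integrable P hX hA i')
    fun ω => aux_ls_mono (fun _ ht => ⟨aux_scaleTimes_mono X ω h ht.1, ht.2⟩)

lemma aux_nu_subadd (hX : ∀ t, Measurable (X t)) (hA : MeasurableSet A)
    {C : Set 𝒳} (hC : MeasurableSet C) (i : ℕ) :
    ∫ ω, limitSubmeasure X (scaleTimes X i) A ω ∂P
      ≤ (∫ ω, limitSubmeasure X (scaleTimes X i) (A \ C) ω ∂P)
        + ∫ ω, limitSubmeasure X (scaleTimes X i) C ω ∂P := by
  have h1 := aux_ls_integrable P hX (hA.diff hC) i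
  have h2 := aux_ls_integrable P hX hC i
  calc ∫ ω, limitSubmeasure X (scaleTimes X i) A ω ∂P
      ≤ ∫ ω, (limitSubmeasure X (scaleTimes X i) (A \ C) ω
          + limitSubmeasure X (scaleTimes X i) C ω) ∂P :=
        integral_mono (aux_ls_integrable P hX hA i) (h1.add h2) fun _ => aux_ls_subadd
    _ = _ := integral_add h1 h2

lemma aux_case1 (hX : ∀ t, Measurable (X t)) {A : ℕ → Set 𝒳}
    (hA : ∀ i, MeasurableSet (A i)) (hAnti : Antitone A)
    (hC4 : SatisfiesC4 P X) {ε : ℝ} (hε : 0 < ε)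
    (hcon : ∀ i, ε ≤ ⨆ p : ℕ, ∫ ω, limitSubmeasure X (scaleTimes X p) (A i) ω ∂P)
    (hcase : ∀ q, ∃ i, (∫ ω, limitSubmeasure X (scaleTimes X q) (A i) ω ∂P) < 2*ε/3) :
    False := by
  classical
  have hbdd : ∀ i, BddAbove (Set.range fun p : ℕ =>
      ∫ ω, limitSubmeasure X (scaleTimes X p) (A i) ω ∂P) := fun i =>
    ⟨1, by rintro _ ⟨p, rfl⟩; exact aux_nu_le_one P hX (hA i) p⟩
  have EX1 : ∀ qprev iprev : ℕ, ∃ qi : ℕ × ℕ, qprev < qi.1 ∧ iprev < qi.2 ∧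
      3*ε/4 < (∫ ω, limitSubmeasure X (scaleTimes X qi.1) (A iprev) ω ∂P) ∧
      (∫ ω, limitSubmeasure X (scaleTimes X qi.1) (A qi.2) ω ∂P) < 2*ε/3 := by
    intro qprev iprev
    have h1 : 3*ε/4 < ⨆ p : ℕ, ∫ ω, limitSubmeasure X (scaleTimes X p) (A iprev) ω ∂P :=
      lt_of_lt_of_le (by linarith) (hcon iprev)
    obtain ⟨p, hp⟩ := (lt_ciSup_iff (hbdd iprev)).1 h1
    set q := max p (qprev + 1) with hq
    have hq1 : 3*ε/4 < ∫ ω, limitSubmeasure X (scaleTimes X q) (A iprev) ω ∂P :=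
      lt_of_lt_of_le hp (aux_nu_mono_scale P hX (hA iprev) (le_max_left _ _))
    obtain ⟨i, hi⟩ := hcase q
    set i' := max i (iprev + 1) with hi'
    refine ⟨(q, i'), by omega, by omega, hq1, ?_⟩
    exact lt_of_le_of_lt
      (aux_nu_mono_set P hX (hA i') (hA i) q (hAnti (le_max_left _ _))) hi
  set g : ℕ → ℕ × ℕ := fun j =>
    Nat.rec (Classical.choose (EX1 0 0))
      (fun _ prev => Classical.choose (EX1 prev.1 prev.2)) j with hg
  have hgsucc : ∀ j : ℕ, g (j+1) = Classical.choose (EX1 (g j).1 (g j).2) := fun j => rfl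
  set iseq : ℕ → ℕ := fun j => Nat.rec 0 (fun j' _ => (g j').2) j with hiseq
  set qseq : ℕ → ℕ := fun j => (g j).1 with hqseq
  have hiseqsucc : ∀ j, iseq (j+1) = (g j).2 := fun j => rfl
  have hspec : ∀ j, qseq j < qseq (j+1) ∧ iseq j < iseq (j+1) ∧
      3*ε/4 < (∫ ω, limitSubmeasure X (scaleTimes X (qseq j)) (A (iseq j)) ω ∂P) ∧
      (∫ ω, limitSubmeasure X (scaleTimes X (qseq j)) (A (iseq (j+1))) ω ∂P) < 2*ε/3 := by
    intro j
    induction j with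
    | zero =>
      have h0 := Classical.choose_spec (EX1 0 0)
      have h1 := Classical.choose_spec (EX1 (g 0).1 (g 0).2)
      exact ⟨h1.1, h0.2.1, h0.2.2.1, h0.2.2.2⟩
    | succ n _ =>
      have h1 := Classical.choose_spec (EX1 (g n).1 (g n).2)
      have h2 := Classical.choose_spec (EX1 (g (n+1)).1 (g (n+1)).2)
      exact ⟨h2.1, h1.2.1, h1.2.2.1, h1.2.2.2⟩
  have hqmono : StrictMono qseq := strictMono_nat_of_lt_succ fun j => (hspec j).1
  have himono : Monotone iseq := monotone_nat_of_le_succ fun j => le_of_lt (hspec j).2.1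
  set B : ℕ → Set 𝒳 := fun j => A (iseq j) \ A (iseq (j+1)) with hB
  have hBm : ∀ j, MeasurableSet (B j) := fun j => (hA _).diff (hA _)
  have hBdisj : ∀ j j', j ≠ j' → Disjoint (B j) (B j') := by
    have key : ∀ j j', j < j' → Disjoint (B j) (B j') := by
      intro j j' hjj'
      refine Set.disjoint_left.2 fun x hx hx' => ?_
      exact hx.2 (hAnti (himono (show j + 1 ≤ j' by omega)) hx'.1)
    intro j j' h
    rcases Nat.lt_or_ge j j' with h1 | h1
    · exact key j j' h1
    · exact (key j' j (by omega)).symm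
  have hBlb : ∀ j, ε/12 ≤ ∫ ω, limitSubmeasure X (scaleTimes X (qseq j)) (B j) ω ∂P := by
    intro j
    have hsub := aux_nu_subadd P hX (hA (iseq j)) (hA (iseq (j+1))) (qseq j)
    have h1 := (hspec j).2.2.1
    have h2 := (hspec j).2.2.2
    have hBdef : A (iseq j) \ A (iseq (j+1)) = B j := rfl
    linarith [hsub, h1, h2]
  set C : ℕ → Set 𝒳 := fun q => ⋃ (j : ℕ) (_ : qseq j = q), B j with hC
  have hCm : ∀ q, MeasurableSet (C q) :=
    fun q => MeasurableSet.iUnion fun j => MeasurableSet.iUnion fun _ => hBm j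
  have hCdisj : Pairwise (Function.onFun Disjoint C) := by
    intro q q' hqq'
    simp only [Function.onFun]
    refine Set.disjoint_left.2 fun x hx hx' => ?_
    rcases Set.mem_iUnion.1 hx with ⟨j, hj⟩
    rcases Set.mem_iUnion.1 hj with ⟨hje, hxj⟩
    rcases Set.mem_iUnion.1 hx' with ⟨j', hj'⟩
    rcases Set.mem_iUnion.1 hj' with ⟨hje', hxj'⟩
    have : j ≠ j' := fun h => hqq' (by rw [← hje, ← hje', h])
    exact Set.disjoint_left.mp (hBdisj j j' this) hxj hxj'
  have htend := hC4 C hCm hCdisj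
  have hcomp : Filter.Tendsto (fun j => ∫ ω,
      limitSubmeasure X (scaleTimes X (qseq j)) (C (qseq j)) ω ∂P)
      Filter.atTop (nhds 0) := htend.comp hqmono.tendsto_atTop
  have hlb : ∀ j, ε/12 ≤ ∫ ω,
      limitSubmeasure X (scaleTimes X (qseq j)) (C (qseq j)) ω ∂P := by
    intro j
    refine le_trans (hBlb j) ?_
    refine aux_nu_mono_set P hX (hBm j) (hCm (qseq j)) (qseq j) ?_
    intro x hx
    exact Set.mem_iUnion.2 ⟨j, Set.mem_iUnion.2 ⟨rfl, hx⟩⟩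
  have : ε/12 ≤ (0:ℝ) := ge_of_tendsto hcomp (Filter.Eventually.of_forall hlb)
  linarith

lemma aux_case2 (hX : ∀ t, Measurable (X t)) {A : ℕ → Set 𝒳}
    (hA : ∀ i, MeasurableSet (A i)) (hAnti : Antitone A) (hAempty : (⋂ i, A i) = ∅)
    (hC4 : SatisfiesC4 P X) {ε : ℝ} (hε : 0 < ε) (q0 : ℕ)
    (hq0 : ∀ i, 2*ε/3 ≤ ∫ ω, limitSubmeasure X (scaleTimes X q0) (A i) ω ∂P) :
    False := by
  classical
  set g : Ω → ℝ := fun ω => ⨅ i : ℕ, limitSubmeasure X (scaleTimes X q0) (A i) ω with hgdef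
  have hls_anti : ∀ ω : Ω, Antitone (fun i => limitSubmeasure X (scaleTimes X q0) (A i) ω) :=
    fun ω i i' h => aux_ls_mono (fun t ht => ⟨ht.1, hAnti h ht.2⟩)
  have hbdd_below : ∀ ω : Ω, BddBelow (Set.range fun i =>
      limitSubmeasure X (scaleTimes X q0) (A i) ω) :=
    fun ω => ⟨0, by rintro _ ⟨i, rfl⟩; exact aux_ls_nonneg⟩
  have hg_tendsto : ∀ ω : Ω, Filter.Tendsto
      (fun i => limitSubmeasure X (scaleTimes X q0) (A i) ω) Filter.atTop (nhds (g ω)) :=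
    fun ω => tendsto_atTop_ciInf (hls_anti ω) (hbdd_below ω)
  have hg_meas : Measurable g := Measurable.iInf (fun i => aux_ls_meas hX (hA i) q0)
  have hg_nonneg : ∀ ω, 0 ≤ g ω := fun ω => le_ciInf fun i => aux_ls_nonneg
  have hg_le_one : ∀ ω, g ω ≤ 1 := fun ω =>
    le_trans (ciInf_le (hbdd_below ω) 0) aux_ls_le_one
  have hg_int : Integrable g P := by
    refine (integrable_const (1:ℝ)).mono' hg_meas.aestronglyMeasurable ?_
    exact Filter.Eventually.of_forall fun ω => by
      rw [Real.norm_eq_abs, abs_le]; exact ⟨by linarith [hg_nonneg ω], hg_le_one ω⟩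
  have hint_tendsto : Filter.Tendsto
      (fun i => ∫ ω, limitSubmeasure X (scaleTimes X q0) (A i) ω ∂P)
      Filter.atTop (nhds (∫ ω, g ω ∂P)) := by
    refine MeasureTheory.tendsto_integral_of_dominated_convergence (fun _ => (1:ℝ))
      (fun i => (aux_ls_meas hX (hA i) q0).aestronglyMeasurable) (integrable_const 1)
      (fun i => Filter.Eventually.of_forall fun ω => ?_)
      (Filter.Eventually.of_forall fun ω => hg_tendsto ω)
    rw [Real.norm_eq_abs, abs_le]
    constructor
    · show (-1:ℝ) ≤ limitSubmeasure X (scaleTimes X q0) (A i) ω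
      linarith [@aux_ls_nonneg Ω _ 𝒳 _ X (scaleTimes X q0) (A i) ω]
    · exact aux_ls_le_one
  have hgint_lb : 2*ε/3 ≤ ∫ ω, g ω ∂P :=
    ge_of_tendsto hint_tendsto (Filter.Eventually.of_forall hq0)
  set Om0 : Set Ω := {ω | ε/3 ≤ g ω} with hOm0def
  have hOm0m : MeasurableSet Om0 := measurableSet_le measurable_const hg_meas
  have hmarkov : ε/3 ≤ (P Om0).toReal := by
    by_contra hm
    push_neg at hm
    have hptw : ∀ ω, g ω ≤ Om0.indicator (fun _ => (1:ℝ)) ω + ε/3 := by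
      intro ω
      by_cases h : ω ∈ Om0
      · rw [Set.indicator_of_mem h]; linarith [hg_le_one ω]
      · rw [Set.indicator_of_notMem h]
        have h2 : ¬ (ε/3 ≤ g ω) := h
        push_neg at h2
        linarith
    have hind_int : Integrable (fun ω => Om0.indicator (fun _ => (1:ℝ)) ω + ε/3) P :=
      ((integrable_const (1:ℝ)).indicator hOm0m).add (integrable_const _)
    have hle := integral_mono hg_int hind_int hptw
    rw [integral_add ((integrable_const (1:ℝ)).indicator hOm0m) (integrable_const _),
      integral_indicator_const (1:ℝ) hOm0m, integral_const] at hle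
    simp only [smul_eq_mul, mul_one, Measure.real, measure_univ, ENNReal.toReal_one, one_mul] at hle
    linarith
  have hOm0g : ∀ ω ∈ Om0, ∀ i, ε/3 ≤ limitSubmeasure X (scaleTimes X q0) (A i) ω :=
    fun ω hω i => le_trans hω (ciInf_le (hbdd_below ω) i)
  have hfreq : ∀ ω ∈ Om0, ∀ i, ∃ᶠ T in Filter.atTop,
      ε/6 < avgVisit X (scaleTimes X q0) (A i) T ω := by
    intro ω hω i
    refine Filter.frequently_lt_of_lt_limsup aux_cobdd ?_
    exact lt_of_lt_of_le (by linarith) (hOm0g ω hω i)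
  set Dset : ℕ → ℕ → ℕ → Set Ω := fun i N Tb =>
    {ω | ∃ T, N < T ∧ T ≤ Tb ∧ ε/6 ≤ avgVisit X (scaleTimes X q0) (A i) T ω} with hDdef
  have hDm : ∀ i N Tb, MeasurableSet (Dset i N Tb) := by
    intro i N Tb
    have hrw : Dset i N Tb = ⋃ (T : ℕ) (_ : N < T ∧ T ≤ Tb),
        {ω | ε/6 ≤ avgVisit X (scaleTimes X q0) (A i) T ω} := by
      ext ω
      simp only [hDdef, Set.mem_setOf_eq, Set.mem_iUnion]
      tauto
    rw [hrw]
    exact MeasurableSet.iUnion fun T => MeasurableSet.iUnion fun _ =>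
      measurableSet_le measurable_const (aux_avg_meas hX (hA i) q0 T)
  have hDmono : ∀ i N, Monotone (Dset i N) := by
    intro i N Tb Tb' h ω hω
    obtain ⟨T, h1, h2, h3⟩ := hω
    exact ⟨T, h1, h2.trans h, h3⟩
  have hDcover : ∀ i N, Om0 ⊆ ⋃ Tb, Dset i N Tb := by
    intro i N ω hω
    obtain ⟨T, hT1, hT2⟩ := (Filter.frequently_atTop.1 (hfreq ω hω i) (N+1))
    exact Set.mem_iUnion.2 ⟨T, T, by omega, le_refl T, le_of_lt hT2⟩
  have EXD : ∀ (i N : ℕ) (eta : ENNReal), 0 < eta → ∃ Tb, P (Om0 \ Dset i N Tb) < eta := by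
    intro i N eta heta
    have hanti : Antitone (fun Tb => Om0 \ Dset i N Tb) := by
      intro a b hab
      exact Set.diff_subset_diff_right (hDmono i N hab)
    have hempty : ⋂ Tb, (Om0 \ Dset i N Tb) = ∅ := by
      refine Set.eq_empty_iff_forall_notMem.2 fun ω hω => ?_
      have h1 : ω ∈ Om0 := (Set.mem_iInter.1 hω 0).1
      obtain ⟨Tb, hTb⟩ := Set.mem_iUnion.1 (hDcover i N h1)
      exact (Set.mem_iInter.1 hω Tb).2 hTb
    have htnd := tendsto_measure_iInter_atTop
      (fun Tb => ((hOm0m.diff (hDm i N Tb)).nullMeasurableSet)) hanti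
      ⟨0, measure_ne_top P _⟩
    have htnd' : Filter.Tendsto (fun Tb => P (Om0 \ Dset i N Tb)) Filter.atTop
        (nhds (P (⋂ Tb, (Om0 \ Dset i N Tb)))) := htnd
    rw [hempty, measure_empty] at htnd'
    exact (htnd'.eventually_lt_const heta).exists
  set Hset : ℕ → ℕ → Set Ω := fun Tb i => ⋃ (t : ℕ) (_ : t ∈ Finset.Icc 1 Tb),
    {ω | X t ω ∈ A i} with hHdef
  have hHm : ∀ Tb i, MeasurableSet (Hset Tb i) :=
    fun Tb i => MeasurableSet.iUnion fun t => MeasurableSet.iUnion fun _ => (hX t) (hA i)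
  have EXH : ∀ (Tb ilow : ℕ) (eta : ENNReal), 0 < eta →
      ∃ i, ilow < i ∧ P (Hset Tb i) < eta := by
    intro Tb ilow eta heta
    have hev : ∀ t : ℕ, Filter.Tendsto (fun i => P {ω | X t ω ∈ A i})
        Filter.atTop (nhds 0) := by
      intro t
      have hanti : Antitone (fun i => {ω | X t ω ∈ A i}) :=
        fun a b hab ω hω => hAnti hab hω
      have hempty : ⋂ i, {ω | X t ω ∈ A i} = ∅ := by
        refine Set.eq_empty_iff_forall_notMem.2 fun ω hω => ?_
        have hmem : X t ω ∈ ⋂ i, A i := Set.mem_iInter.2 fun i => Set.mem_iInter.1 hω i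
        rw [hAempty] at hmem
        exact hmem
      have htnd := tendsto_measure_iInter_atTop
        (fun i => ((hX t) (hA i)).nullMeasurableSet) hanti ⟨0, measure_ne_top P _⟩
      have htnd' : Filter.Tendsto (fun i => P {ω | X t ω ∈ A i}) Filter.atTop
          (nhds (P (⋂ i, {ω : Ω | X t ω ∈ A i}))) := htnd
      rw [hempty, measure_empty] at htnd'
      exact htnd'
    have hsum : Filter.Tendsto (fun i => ∑ t ∈ Finset.Icc 1 Tb, P {ω | X t ω ∈ A i})
        Filter.atTop (nhds 0) := by
      have h := tendsto_finset_sum (Finset.Icc 1 Tb) (fun t (_ : t ∈ Finset.Icc 1 Tb) => hev t)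
      simpa using h
    have hub : ∀ i, P (Hset Tb i) ≤ ∑ t ∈ Finset.Icc 1 Tb, P {ω | X t ω ∈ A i} :=
      fun i => measure_biUnion_finset_le _ _
    have htnd : Filter.Tendsto (fun i => P (Hset Tb i)) Filter.atTop (nhds 0) :=
      tendsto_of_tendsto_of_tendsto_of_le_of_le tendsto_const_nhds hsum
        (fun i => zero_le) hub
    obtain ⟨i, hi⟩ := ((htnd.eventually_lt_const heta).and
      (Filter.eventually_gt_atTop ilow)).exists
    exact ⟨i, hi.2, hi.1⟩
  set β : ENNReal := P Om0 with hβ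
  have hβ_lb : ENNReal.ofReal (ε/3) ≤ β := ENNReal.ofReal_le_of_le_toReal hmarkov
  have hβpos : 0 < β :=
    lt_of_lt_of_le (ENNReal.ofReal_pos.2 (by linarith)) hβ_lb
  set eta : ℕ → ENNReal := fun j => β * (2:ENNReal)⁻¹^(j+3) with hetadef
  have hetapos : ∀ j, 0 < eta j := by
    intro j
    refine ENNReal.mul_pos hβpos.ne' ?_
    exact (pow_ne_zero _ (by norm_num : (2:ENNReal)⁻¹ ≠ 0))
  have EX2 : ∀ (j i : ℕ), ∃ Tb i', (j < Tb) ∧ i < i' ∧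
      P (Om0 \ Dset i j Tb) ≤ eta j ∧ P (Hset Tb i') ≤ eta j := by
    intro j i
    obtain ⟨Tb0, hTb0⟩ := EXD i j (eta j) (hetapos j)
    obtain ⟨i', hi'1, hi'2⟩ := EXH (max Tb0 (j+1)) i (eta j) (hetapos j)
    refine ⟨max Tb0 (j+1), i', by omega, hi'1, ?_, le_of_lt hi'2⟩
    exact le_of_lt (lt_of_le_of_lt (measure_mono (Set.diff_subset_diff_right
      (hDmono i j (le_max_left _ _)))) hTb0)
  have hEX2' : ∀ (j i : ℕ), ∃ ti : ℕ × ℕ, (j < ti.1) ∧ i < ti.2 ∧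
      P (Om0 \ Dset i j ti.1) ≤ eta j ∧ P (Hset ti.1 ti.2) ≤ eta j := by
    intro j i
    obtain ⟨Tb, i', h⟩ := EX2 j i
    exact ⟨(Tb, i'), h⟩
  set step : ℕ → ℕ → ℕ × ℕ := fun j i => Classical.choose (hEX2' j i) with hstepdef
  have hstep : ∀ j i, j < (step j i).1 ∧ i < (step j i).2 ∧
      P (Om0 \ Dset i j (step j i).1) ≤ eta j ∧
      P (Hset (step j i).1 (step j i).2) ≤ eta j :=
    fun j i => Classical.choose_spec (hEX2' j i)
  set iseq : ℕ → ℕ := fun j => Nat.rec 0 (fun j' prev => (step j' prev).2) j with hiseq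
  set Tb : ℕ → ℕ := fun j => (step j (iseq j)).1 with hTbdef
  have hiseqsucc : ∀ j, iseq (j+1) = (step j (iseq j)).2 := fun j => rfl
  have himono : ∀ j, iseq j < iseq (j+1) := fun j => (hstep j (iseq j)).2.1
  have himon : Monotone iseq := monotone_nat_of_le_succ fun j => le_of_lt (himono j)
  set G : ℕ → Set Ω := fun j =>
    (Om0 ∩ Dset (iseq j) j (Tb j)) \ Hset (Tb j) (iseq (j+1)) with hG
  have hGm : ∀ j, MeasurableSet (G j) :=
    fun j => ((hOm0m.inter (hDm _ _ _)).diff (hHm _ _))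
  have hGbound : ∀ j, P (Om0 \ G j) ≤ 2 * eta j := by
    intro j
    have hsub : Om0 \ G j ⊆ (Om0 \ Dset (iseq j) j (Tb j)) ∪ Hset (Tb j) (iseq (j+1)) := by
      intro ω hω
      by_cases hH : ω ∈ Hset (Tb j) (iseq (j+1))
      · exact Or.inr hH
      · exact Or.inl ⟨hω.1, fun hD => hω.2 ⟨⟨hω.1, hD⟩, hH⟩⟩
    calc P (Om0 \ G j)
        ≤ P ((Om0 \ Dset (iseq j) j (Tb j)) ∪ Hset (Tb j) (iseq (j+1))) :=
          measure_mono hsub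
      _ ≤ P (Om0 \ Dset (iseq j) j (Tb j)) + P (Hset (Tb j) (iseq (j+1))) :=
          measure_union_le _ _
      _ ≤ eta j + eta j := add_le_add (hstep j (iseq j)).2.2.1 (hstep j (iseq j)).2.2.2
      _ = 2 * eta j := by ring
  set Om1 : Set Ω := Om0 ∩ ⋂ j, G j with hOm1
  have hOm1m : MeasurableSet Om1 := hOm0m.inter (MeasurableSet.iInter hGm)
  have hgeo : ∑' (j:ℕ), ((2:ENNReal)⁻¹)^j = 2 := by
    rw [ENNReal.tsum_geometric, ENNReal.one_sub_inv_two, inv_inv]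
  have hsumeta : (∑' (j:ℕ), 2 * eta j) = β / 2 := by
    have hterm : ∀ j:ℕ, 2 * eta j = (2 * β * (2:ENNReal)⁻¹^3) * ((2:ENNReal)⁻¹)^j := by
      intro j
      rw [hetadef]
      simp only []
      rw [pow_add]
      ring
    calc ∑' (j:ℕ), 2 * eta j
        = ∑' (j:ℕ), (2 * β * (2:ENNReal)⁻¹^3) * ((2:ENNReal)⁻¹)^j := tsum_congr hterm
      _ = (2 * β * (2:ENNReal)⁻¹^3) * 2 := by rw [ENNReal.tsum_mul_left, hgeo]
      _ = β * ((2 * (2:ENNReal)⁻¹) * (2 * (2:ENNReal)⁻¹) * (2:ENNReal)⁻¹) := by ring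
      _ = β * (2:ENNReal)⁻¹ := by
          rw [ENNReal.mul_inv_cancel (by norm_num) (by norm_num)]
          simp
      _ = β / 2 := by rw [ENNReal.div_eq_inv_mul, mul_comm]
  have hP_except : P (Om0 \ ⋂ j, G j) ≤ β / 2 := by
    have hcover : Om0 \ ⋂ j, G j ⊆ ⋃ j, (Om0 \ G j) := by
      intro ω hω
      obtain ⟨h1, h2⟩ := hω
      rw [Set.mem_iInter] at h2
      push_neg at h2
      obtain ⟨j, hj⟩ := h2
      exact Set.mem_iUnion.2 ⟨j, h1, hj⟩
    calc P (Om0 \ ⋂ j, G j) ≤ ∑' j, P (Om0 \ G j) :=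
          le_trans (measure_mono hcover) (measure_iUnion_le _)
      _ ≤ ∑' j, 2 * eta j := ENNReal.tsum_le_tsum hGbound
      _ = β / 2 := hsumeta
  have hPOm1 : β / 2 ≤ P Om1 := by
    have hcov : Om0 ⊆ (Om0 \ ⋂ j, G j) ∪ Om1 := by
      intro ω hω
      by_cases h : ω ∈ ⋂ j, G j
      · exact Or.inr ⟨hω, h⟩
      · exact Or.inl ⟨hω, h⟩
    have h1 : β ≤ β / 2 + P Om1 :=
      le_trans (measure_mono hcov) (le_trans (measure_union_le _ _)
        (add_le_add hP_except (le_refl _)))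
    have h2 : β - β/2 ≤ P Om1 := tsub_le_iff_left.2 h1
    rwa [ENNReal.sub_half (measure_ne_top P _)] at h2
  set B : ℕ → Set 𝒳 := fun j => A (iseq j) \ A (iseq (j+1)) with hBdef
  have hBm : ∀ j, MeasurableSet (B j) := fun j => (hA _).diff (hA _)
  have hBdisj : ∀ j j', j ≠ j' → Disjoint (B j) (B j') := by
    have key : ∀ j j', j < j' → Disjoint (B j) (B j') := by
      intro j j' hjj'
      refine Set.disjoint_left.2 fun x hx hx' => ?_
      exact hx.2 (hAnti (himon (show j + 1 ≤ j' by omega)) hx'.1)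
    intro j j' h
    rcases Nat.lt_or_ge j j' with h1 | h1
    · exact key j j' h1
    · exact (key j' j (by omega)).symm
  set C : ℕ → Set 𝒳 := fun q => ⋃ m : ℕ, B (Nat.pair q m) with hC
  have hCm : ∀ q, MeasurableSet (C q) := fun q => MeasurableSet.iUnion fun m => hBm _
  have hCdisj : Pairwise (Function.onFun Disjoint C) := by
    intro q q' hqq'
    simp only [Function.onFun]
    refine Set.disjoint_left.2 fun x hx hx' => ?_
    rcases Set.mem_iUnion.1 hx with ⟨m, hm⟩
    rcases Set.mem_iUnion.1 hx' with ⟨m', hm'⟩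
    have hne : Nat.pair q m ≠ Nat.pair q' m' := fun h => hqq' (Nat.pair_eq_pair.1 h).1
    exact Set.disjoint_left.mp (hBdisj _ _ hne) hm hm'
  have hptwise : ∀ ω ∈ Om1, ∀ q, q0 ≤ q →
      ε/6 ≤ limitSubmeasure X (scaleTimes X q) (C q) ω := by
    intro ω hω q hq
    refine Filter.le_limsup_of_frequently_le ?_ aux_bdd
    rw [Filter.frequently_atTop]
    intro N
    have hωG : ω ∈ G (Nat.pair q N) := Set.mem_iInter.1 hω.2 (Nat.pair q N)
    obtain ⟨⟨hω0, T, hT1, hT2, hT3⟩, hωH⟩ := hωG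
    refine ⟨T, by have := Nat.right_le_pair q N; omega, ?_⟩
    refine le_trans hT3 (aux_avg_mono ?_)
    intro t ht hmem
    refine ⟨aux_scaleTimes_mono X ω hq hmem.1, ?_⟩
    have htnot : X t ω ∉ A (iseq (Nat.pair q N + 1)) := by
      intro hcontr
      apply hωH
      refine Set.mem_iUnion.2 ⟨t, Set.mem_iUnion.2 ⟨?_, hcontr⟩⟩
      have hht := Finset.mem_Icc.1 ht
      exact Finset.mem_Icc.2 ⟨hht.1, le_trans hht.2 hT2⟩
    exact Set.mem_iUnion.2 ⟨N, ⟨hmem.2, htnot⟩⟩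
  have hfinal : ∀ q, q0 ≤ q →
      ε/6 * (P Om1).toReal ≤ ∫ ω, limitSubmeasure X (scaleTimes X q) (C q) ω ∂P := by
    intro q hq
    have hptw : ∀ ω, Om1.indicator (fun _ => ε/6) ω
        ≤ limitSubmeasure X (scaleTimes X q) (C q) ω := by
      intro ω
      by_cases h : ω ∈ Om1
      · rw [Set.indicator_of_mem h]; exact hptwise ω h q hq
      · rw [Set.indicator_of_notMem h]; exact aux_ls_nonneg
    have hle := integral_mono ((integrable_const (ε/6)).indicator hOm1m)
      (aux_ls_integrable P hX (hCm q) q) hptw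
    rwa [integral_indicator_const _ hOm1m, smul_eq_mul, mul_comm] at hle
  have hPOm1real : ε/6 ≤ (P Om1).toReal := by
    have h1 : (β/2).toReal ≤ (P Om1).toReal :=
      ENNReal.toReal_mono (measure_ne_top P _) hPOm1
    have h2 : (β/2).toReal = β.toReal / 2 := by
      rw [ENNReal.toReal_div]
      norm_num
    rw [h2] at h1
    have h3 : ε/3 ≤ β.toReal := hmarkov
    linarith
  have htendC := hC4 C hCm hCdisj
  have hev := htendC.eventually_lt_const (show (0:ℝ) < ε/6 * (ε/6) by positivity)
  obtain ⟨q, hq1, hq2⟩ := (hev.and (Filter.eventually_ge_atTop q0)).exists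
  have hge := hfinal q hq2
  have hle : ε/6 * (ε/6) ≤ ε/6 * (P Om1).toReal := by nlinarith
  linarith

end Nu


/-- equivalent characterization of condition C4. -/
theorem stmt1 [TopologicalSpace 𝒳] [TopologicalSpace.SeparableSpace 𝒳]
    [TopologicalSpace.MetrizableSpace 𝒳] [BorelSpace 𝒳]
    (P : Measure Ω) [IsProbabilityMeasure P]
    (X : ℕ → Ω → 𝒳) (hX : ∀ t, Measurable (X t)) :
    SatisfiesC4 P X ↔
      ∀ A : ℕ → Set 𝒳, (∀ i, MeasurableSet (A i)) → Antitone A → (⋂ i, A i) = ∅ →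
        Filter.Tendsto
          (fun i => ⨆ p : ℕ, ∫ ω, limitSubmeasure X (scaleTimes X p) (A i) ω ∂P)
          Filter.atTop (nhds 0) := by
  classical
  set ν : ℕ → Set 𝒳 → ℝ :=
    fun p S => ∫ ω, limitSubmeasure X (scaleTimes X p) S ω ∂P with hν
  constructor
  · intro hC4 A hA hAnti hAempty
    have hbdd : ∀ i, BddAbove (Set.range fun p => ν p (A i)) := by
      intro i
      exact ⟨1, by rintro _ ⟨p, rfl⟩; exact aux_nu_le_one P hX (hA i) p⟩
    have key : ∀ ε > (0:ℝ), ∃ i, (⨆ p : ℕ, ν p (A i)) < ε := by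
      intro ε hε
      by_contra hcontr
      push_neg at hcontr
      by_cases hcase : ∀ q, ∃ i, ν q (A i) < 2*ε/3
      · exact aux_case1 P hX hA hAnti hC4 hε hcontr hcase
      · push_neg at hcase
        obtain ⟨q0, hq0⟩ := hcase
        exact aux_case2 P hX hA hAnti hAempty hC4 hε q0 hq0
    rw [Metric.tendsto_atTop]
    intro ε hε
    obtain ⟨i0, hi0⟩ := key ε hε
    refine ⟨i0, fun n hn => ?_⟩
    have h1 : (⨆ p : ℕ, ν p (A n)) ≤ ⨆ p : ℕ, ν p (A i0) :=
      ciSup_mono (hbdd i0) fun p =>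
        aux_nu_mono_set P hX (hA n) (hA i0) p (hAnti hn)
    have h2 : 0 ≤ ⨆ p : ℕ, ν p (A n) :=
      le_trans (aux_nu_nonneg P 0) (le_ciSup (hbdd n) 0)
    rw [Real.dist_eq, sub_zero, abs_of_nonneg h2]
    exact lt_of_le_of_lt h1 hi0
  · intro hsup A hA hdisj
    set B : ℕ → Set 𝒳 := fun i => ⋃ j, A (i + j) with hB
    have hBm : ∀ i, MeasurableSet (B i) := fun i => MeasurableSet.iUnion fun _ => hA _
    have hBanti : Antitone B := by
      intro i i' hii' x hx
      rcases Set.mem_iUnion.1 hx with ⟨j, hj⟩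
      exact Set.mem_iUnion.2 ⟨i' - i + j, by
        rwa [show i + (i' - i + j) = i' + j by omega]⟩
    have hBempty : ⋂ i, B i = ∅ := by
      refine Set.eq_empty_iff_forall_notMem.2 fun x hx => ?_
      rcases Set.mem_iUnion.1 (Set.mem_iInter.1 hx 0) with ⟨j0, hj0⟩
      rcases Set.mem_iUnion.1 (Set.mem_iInter.1 hx (0 + j0 + 1)) with ⟨j1, hj1⟩
      exact Set.disjoint_left.mp (hdisj (show 0 + j0 ≠ 0 + j0 + 1 + j1 by omega)) hj0 hj1
    have hlim := hsup B hBm hBanti hBempty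
    refine squeeze_zero (fun i => aux_nu_nonneg P i) (fun i => ?_) hlim
    have hsub : A i ⊆ B i := fun x hx => Set.mem_iUnion.2 ⟨0, by simpa using hx⟩
    calc ∫ ω, limitSubmeasure X (scaleTimes X i) (A i) ω ∂P
        ≤ ∫ ω, limitSubmeasure X (scaleTimes X i) (B i) ω ∂P :=
          aux_nu_mono_set P hX (hA i) (hBm i) i hsub
      _ ≤ ⨆ p : ℕ, ∫ ω, limitSubmeasure X (scaleTimes X p) (B i) ω ∂P :=
          by
          have hb : BddAbove (Set.range fun p : ℕ =>
              ∫ ω, limitSubmeasure X (scaleTimes X p) (B i) ω ∂P) :=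
            ⟨1, by rintro _ ⟨p, rfl⟩; exact aux_nu_le_one P hX (hBm i) p⟩
          exact le_ciSup hb i
end
end

section
/- Let 𝒳 be a separable metrizable space with its Borel σ-algebra such that there does not exist a non-atomic probability measure on 𝒳. Then every stochastic process 𝕏 on 𝒳 satisfying condition C2 visits a sublinear number of distinct points: almost surely, |{x ∈ 𝒳 : x ∈ {X_1,…,X_T}}| = o(T) as T → ∞. -/
open MeasureTheory Filter Set Topology

noncomputable section

variable {Ω : Type*} [MeasurableSpace Ω] {𝒳 : Type*} [MeasurableSpace 𝒳]

private lemma aux_ae_atom {Ω : Type*} [MeasurableSpace Ω] {𝒳 : Type*} [MeasurableSpace 𝒳]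
    [MeasurableSingletonClass 𝒳]
    (P : Measure Ω) [IsProbabilityMeasure P]
    (hno : ¬ ∃ μ : Measure 𝒳, IsProbabilityMeasure μ ∧ ∀ x : 𝒳, μ {x} = 0)
    (g : Ω → 𝒳) (hg : Measurable g) :
    ∀ᵐ ω ∂P, g ω ∈ {x : 𝒳 | 0 < P {ω | g ω = x}} := by
  set S : Set 𝒳 := {x : 𝒳 | 0 < P {ω | g ω = x}} with hS
  have hSc : S.Countable := Measure.countable_meas_level_set_pos hg
  have hSm : MeasurableSet S := hSc.measurableSet
  set B : Set Ω := g ⁻¹' Sᶜ with hB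
  have hBm : MeasurableSet B := hg hSm.compl
  by_contra hcon
  have hBpos : 0 < P B := by
    rw [pos_iff_ne_zero]
    intro h0
    exact hcon (ae_iff.mpr h0)
  set ν : Measure 𝒳 := (P B)⁻¹ • (P.restrict B).map g with hν
  have hνx : ∀ x : 𝒳, ν {x} = 0 := by
    intro x
    have hmap : ((P.restrict B).map g) {x} = P (g ⁻¹' {x} ∩ B) := by
      rw [Measure.map_apply hg (measurableSet_singleton x),
        Measure.restrict_apply (hg (measurableSet_singleton x))]
    by_cases hx : x ∈ S
    · have : g ⁻¹' {x} ∩ B = ∅ := by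
        ext ω
        simp only [mem_inter_iff, mem_preimage, mem_singleton_iff, mem_compl_iff, hB]
        constructor
        · rintro ⟨rfl, h2⟩; exact h2 hx
        · exact fun h => h.elim
      simp [hν, hmap, this]
    · have hx0 : P {ω | g ω = x} = 0 := by
        by_contra h; exact hx (pos_iff_ne_zero.mpr h)
      have : P (g ⁻¹' {x} ∩ B) = 0 :=
        measure_mono_null (inter_subset_left)
          (by simpa [Set.preimage, Set.mem_singleton_iff] using hx0)
      simp [hν, hmap, this]
  have hνp : IsProbabilityMeasure ν := by
    constructor
    rw [hν, Measure.smul_apply, Measure.map_apply hg MeasurableSet.univ]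
    simp only [Set.preimage_univ, Measure.restrict_apply MeasurableSet.univ, Set.univ_inter]
    exact ENNReal.inv_mul_cancel hBpos.ne' (measure_ne_top P B) ▸ rfl
  exact hno ⟨ν, hνp, hνx⟩

private lemma aux_count_le {Ω : Type*} {𝒳 : Type*} (X : ℕ → Ω → 𝒳) (f : ℕ → 𝒳) (ω : Ω)
    (h : ∀ t, X t ω ∈ Set.range f) (T : ℕ) :
    ({x : 𝒳 | ∃ t, 1 ≤ t ∧ t ≤ T ∧ X t ω = x}).ncard
      ≤ distinctSetCount X (fun k => {f k} \ (f '' Set.Iio k)) T ω := by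
  set A : ℕ → Set 𝒳 := fun k => {f k} \ (f '' Set.Iio k) with hA
  have hdisj : Pairwise (Function.onFun Disjoint A) := by
    intro k l hkl
    rw [Function.onFun, Set.disjoint_left]
    rintro x ⟨hx1, hx2⟩ ⟨hy1, hy2⟩
    simp only [Set.mem_singleton_iff] at hx1 hy1
    rcases lt_or_gt_of_ne hkl with hlt | hlt
    · exact hy2 ⟨k, hlt, hx1.symm⟩
    · exact hx2 ⟨l, hlt, hy1.symm⟩
  classical
  set φ : 𝒳 → ℕ := fun x => if hx : ∃ k, f k = x then Nat.find hx else 0 with hφ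
  have hmem : ∀ x ∈ Set.range f, x ∈ A (φ x) := by
    rintro x ⟨k, rfl⟩
    have hx : ∃ j, f j = f k := ⟨k, rfl⟩
    simp only [hφ, dif_pos hx]
    refine ⟨by simpa using (Nat.find_spec hx).symm, ?_⟩
    rintro ⟨j, hj, hjx⟩
    exact Nat.find_min hx hj hjx
  set K : Set ℕ := {k : ℕ | ∃ t, 1 ≤ t ∧ t ≤ T ∧ X t ω ∈ A k} with hK
  have hKfin : K.Finite := by
    have hsub : K ⊆ ⋃ t ∈ Finset.Icc 1 T, {k | X t ω ∈ A k} := by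
      rintro k ⟨t, ht1, ht2, htk⟩
      exact Set.mem_biUnion (Finset.mem_Icc.mpr ⟨ht1, ht2⟩) htk
    refine Set.Finite.subset
      (Set.Finite.biUnion (Finset.Icc 1 T).finite_toSet fun t _ => ?_) hsub
    refine Set.Subsingleton.finite fun k hk l hl => ?_
    by_contra hne
    exact Set.disjoint_left.mp (hdisj hne) hk hl
  refine Set.ncard_le_ncard_of_injOn φ ?_ ?_ hKfin
  · rintro x ⟨t, ht1, ht2, rfl⟩
    exact ⟨t, ht1, ht2, hmem _ (h t)⟩
  · rintro x ⟨t, ht1, ht2, rfl⟩ y ⟨s, hs1, hs2, rfl⟩ hxy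
    have h1 := hmem _ (h t)
    have h2 := hmem _ (h s)
    rw [hxy] at h1
    rcases h1 with ⟨e1, _⟩
    rcases h2 with ⟨e2, _⟩
    simp only [Set.mem_singleton_iff] at e1 e2
    exact e1.trans e2.symm

/-- if 𝒳 admits no non-atomic probability measure, every C2 process

visits a sublinear number of distinct points almost surely. -/
theorem stmt9 [TopologicalSpace 𝒳] [TopologicalSpace.SeparableSpace 𝒳]
    [TopologicalSpace.MetrizableSpace 𝒳] [BorelSpace 𝒳]
    (hno : ¬ ∃ μ : Measure 𝒳, IsProbabilityMeasure μ ∧ ∀ x : 𝒳, μ {x} = 0)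
    (P : Measure Ω) [IsProbabilityMeasure P]
    (X : ℕ → Ω → 𝒳) (hX : ∀ t, Measurable (X t))
    (hC2 : SatisfiesC2 P X) :
    ∀ᵐ ω ∂P, Filter.Tendsto
      (fun T : ℕ => (Set.ncard {x : 𝒳 | ∃ t, 1 ≤ t ∧ t ≤ T ∧ X t ω = x} : ℝ) / T)
      Filter.atTop (nhds 0) := by
  haveI : MeasurableSingletonClass 𝒳 := by
    letI := TopologicalSpace.metrizableSpaceMetric 𝒳
    infer_instance
  -- the atoms of each law
  set S : Set 𝒳 := ⋃ t : ℕ, {x : 𝒳 | 0 < P {ω | X t ω = x}} with hSdef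
  have hSc : S.Countable :=
    Set.countable_iUnion fun t => Measure.countable_meas_level_set_pos (hX t)
  have hae : ∀ᵐ ω ∂P, ∀ t : ℕ, X t ω ∈ S := by
    rw [MeasureTheory.ae_all_iff]
    intro t
    filter_upwards [aux_ae_atom P hno (X t) (hX t)] with ω hω
    exact Set.mem_iUnion.mpr ⟨t, hω⟩
  rcases S.eq_empty_or_nonempty with hSe | hSne
  · filter_upwards [hae] with ω hω
    exact absurd (hSe ▸ hω 1) (Set.notMem_empty _)
  obtain ⟨f, hf⟩ := Set.Countable.exists_eq_range hSc hSne
  set A : ℕ → Set 𝒳 := fun k => {f k} \ (f '' Set.Iio k) with hA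
  have hAm : ∀ k, MeasurableSet (A k) := fun k =>
    (measurableSet_singleton (f k)).diff
      (((Set.finite_Iio k).image f).measurableSet)
  have hAdisj : Pairwise (Function.onFun Disjoint A) := by
    intro k l hkl
    rw [Function.onFun, Set.disjoint_left]
    rintro x ⟨hx1, hx2⟩ ⟨hy1, hy2⟩
    simp only [hA, Set.mem_singleton_iff] at hx1 hy1
    rcases lt_or_gt_of_ne hkl with hlt | hlt
    · exact hy2 ⟨k, hlt, hx1.symm⟩
    · exact hx2 ⟨l, hlt, hy1.symm⟩
  have hC2A := hC2 A hAm hAdisj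
  filter_upwards [hae, hC2A] with ω hω htend
  have hrange : ∀ t, X t ω ∈ Set.range f := fun t => hf ▸ hω t
  refine squeeze_zero (fun T => by positivity) (fun T => ?_) htend
  rw [div_eq_mul_inv, div_eq_mul_inv]
  refine mul_le_mul_of_nonneg_right ?_ (by positivity)
  exact_mod_cast aux_count_le X f ω hrange T
end
end
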